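/- Fix n ≥ 1. For an interval s = [a,b] with 1 ≤ a ≤ b ≤ n, define the linear functional α_s(x) = Σ_{i=a}^{b} x_i on ℝ^n, and define the shard Σ(s) = { x ∈ ℝ^n : α_{[a,b]}(x) = 0, α_{[a,c]}(x) ≥ 0 for all a ≤ c ≤ b, and α_{[c,b]}(x) ≤ 0 for all a ≤ c ≤ b }. Then for all 1 ≤ a ≤ b < d ≤ n, setting s = [a,b], t = [b+1,d], u = [a,d], one has Σ(s) ∩ Σ(t) = Σ(s) ∩ Σ(u) = Σ(t) ∩ Σ(u). -/

import Mathlib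

/-- The linear functional `α_{[a,b]}(x) = ∑_{i ∈ [a,b]} x i`. -/
def alphaI (n : ℕ) (a b : Fin n) (x : Fin n → ℝ) : ℝ :=
  ∑ i ∈ Finset.Icc a b, x i

/-- The shard `Σ([a,b])`: the cone in the hyperplane `α_{[a,b]} = 0` where all
prefix functionals are nonnegative and all suffix functionals are nonpositive. -/
def shard (n : ℕ) (a b : Fin n) : Set (Fin n → ℝ) :=
  {x | alphaI n a b x = 0 ∧
    (∀ c : Fin n, a ≤ c → c ≤ b → 0 ≤ alphaI n a c x) ∧
    (∀ c : Fin n, a ≤ c → c ≤ b → alphaI n c b x ≤ 0)}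

lemma alphaI_split (n : ℕ) (a b c e : Fin n) (hab : a ≤ b)
    (hbc : (b : ℕ) + 1 = (c : ℕ)) (hce : c ≤ e) (x : Fin n → ℝ) :
    alphaI n a e x = alphaI n a b x + alphaI n c e x := by
  unfold alphaI
  rw [← Finset.sum_union]
  · congr 1
    ext i
    simp only [Finset.mem_union, Finset.mem_Icc, Fin.le_def] at *
    omega
  · rw [Finset.disjoint_left]
    intro i hi hi'
    simp only [Finset.mem_Icc, Fin.le_def] at hi hi'
    omega

lemma sub_st_u (n : ℕ) (a b c d : Fin n) (hab : a ≤ b) (hbc : (b : ℕ) + 1 = (c : ℕ))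
    (hcd : c ≤ d) : shard n a b ∩ shard n c d ⊆ shard n a d := by
  rintro x ⟨⟨hs0, hsP, hsS⟩, ⟨ht0, htP, htS⟩⟩
  refine ⟨?_, ?_, ?_⟩
  · rw [alphaI_split n a b c d hab hbc hcd]; linarith
  · intro e hae hed
    by_cases h : e ≤ b
    · exact hsP e hae h
    · have hce : c ≤ e := by
        rw [Fin.le_def, not_le] at h; rw [Fin.le_def]; omega
      rw [alphaI_split n a b c e hab hbc hce]
      have := htP e hce hed
      linarith
  · intro e hae hed
    by_cases h : e ≤ b
    · rw [alphaI_split n e b c d h hbc hcd]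
      have := hsS e hae h
      linarith
    · have hce : c ≤ e := by
        rw [Fin.le_def, not_le] at h; rw [Fin.le_def]; omega
      exact htS e hce hed

lemma sub_su_t (n : ℕ) (a b c d : Fin n) (hab : a ≤ b) (hbc : (b : ℕ) + 1 = (c : ℕ))
    (hcd : c ≤ d) : shard n a b ∩ shard n a d ⊆ shard n c d := by
  rintro x ⟨⟨hs0, hsP, hsS⟩, ⟨hu0, huP, huS⟩⟩
  rw [alphaI_split n a b c d hab hbc hcd] at hu0
  refine ⟨by linarith, ?_, ?_⟩
  · intro e hce hed
    have hae : a ≤ e := by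
      rw [Fin.le_def] at *; omega
    have := huP e hae hed
    rw [alphaI_split n a b c e hab hbc hce] at this
    linarith
  · intro e hce hed
    have hae : a ≤ e := by
      rw [Fin.le_def] at *; omega
    exact huS e hae hed

lemma sub_tu_s (n : ℕ) (a b c d : Fin n) (hab : a ≤ b) (hbc : (b : ℕ) + 1 = (c : ℕ))
    (hcd : c ≤ d) : shard n c d ∩ shard n a d ⊆ shard n a b := by
  rintro x ⟨⟨ht0, htP, htS⟩, ⟨hu0, huP, huS⟩⟩
  rw [alphaI_split n a b c d hab hbc hcd] at hu0
  refine ⟨by linarith, ?_, ?_⟩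
  · intro e hae heb
    have hed : e ≤ d := by
      rw [Fin.le_def] at *; omega
    exact huP e hae hed
  · intro e hae heb
    have hed : e ≤ d := by
      rw [Fin.le_def] at *; omega
    have := huS e hae hed
    rw [alphaI_split n e b c d heb hbc hcd] at this
    linarith

/-- for `s = [a,b]`, `t = [b+1,d]`, `u = [a,d]`, any two of the three
shards `Σ(s), Σ(t), Σ(u)` have the same intersection. -/
theorem stmt_10 (n : ℕ) (hn : 1 ≤ n) (a b c d : Fin n)
    (hab : a ≤ b) (hbc : (b : ℕ) + 1 = (c : ℕ)) (hcd : c ≤ d) :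
    shard n a b ∩ shard n c d = shard n a b ∩ shard n a d ∧
    shard n a b ∩ shard n c d = shard n c d ∩ shard n a d := by
  have h1 := sub_st_u n a b c d hab hbc hcd
  have h2 := sub_su_t n a b c d hab hbc hcd
  have h3 := sub_tu_s n a b c d hab hbc hcd
  constructor
  · apply Set.Subset.antisymm
    · intro x hx; exact ⟨hx.1, h1 hx⟩
    · intro x hx; exact ⟨hx.1, h2 hx⟩
  · apply Set.Subset.antisymm
    · intro x hx; exact ⟨hx.2, h1 hx⟩
    · intro x hx; exact ⟨h3 hx, hx.1⟩
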